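/- Let a₁,…,aₙ ∈ ℝ^d, λ > 0, T > 0, and let F be a probability measure on ℝ. Then log ∫_{|t|≤T} exp(−(1/2) Σ_{k=1}^n ∫_ℝ (1 − cos(⟨t,a_k⟩ z)) λ F(dz)) dt ≤ ∫_ℝ ( log ∫_{|t|≤T} exp(−(λ/2) Σ_{k=1}^n (1 − cos(⟨t,a_k⟩ z))) dt ) F(dz). -/

import Mathlib

open MeasureTheory Metric

/-- Concentration function `Q(F, τ) = sup_x F(x + τB)` with `B` the closed ball of radius 1/2. -/
noncomputable def concFn {d : ℕ} (μ : Measure (EuclideanSpace ℝ (Fin d))) (τ : ℝ) : ℝ :=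
  ⨆ x : EuclideanSpace ℝ (Fin d), (μ (closedBall x (τ / 2))).toReal

/-- Characteristic function of a measure on `ℝ^d`. -/
noncomputable def charF {d : ℕ} (μ : Measure (EuclideanSpace ℝ (Fin d)))
    (t : EuclideanSpace ℝ (Fin d)) : ℂ :=
  ∫ x, Complex.exp (Complex.I * ((inner ℝ t x : ℝ) : ℂ)) ∂μ

/-- Sup-norm `|t| = max_j |t_j|`. -/
noncomputable def supNorm {d : ℕ} (t : EuclideanSpace ℝ (Fin d)) : ℝ :=
  ‖(WithLp.equiv 2 (Fin d → ℝ)) t‖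

/-- `⌊x⌋` = the largest integer `k` with `k < x`. -/
noncomputable def lflr (x : ℝ) : ℤ := ⌈x⌉ - 1

noncomputable def gf {d n : ℕ} (a : Fin n → EuclideanSpace ℝ (Fin d)) (lam : ℝ)
    (t : EuclideanSpace ℝ (Fin d)) (z : ℝ) : ℝ :=
  -(lam/2) * ∑ k, (1 - Real.cos ((inner ℝ t (a k) : ℝ) * z))

lemma gf_apply {d n : ℕ} (a : Fin n → EuclideanSpace ℝ (Fin d)) (lam : ℝ)
    (t : EuclideanSpace ℝ (Fin d)) (z : ℝ) :
    gf a lam t z = -(lam/2) * ∑ k, (1 - Real.cos ((inner ℝ t (a k) : ℝ) * z)) := rfl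

section basics
variable {d n : ℕ} (a : Fin n → EuclideanSpace ℝ (Fin d)) {lam : ℝ}

lemma gf_cont : Continuous (fun p : EuclideanSpace ℝ (Fin d) × ℝ => gf a lam p.1 p.2) := by
  unfold gf
  refine continuous_const.mul (continuous_finset_sum _ fun k _ => ?_)
  exact continuous_const.sub
    (Real.continuous_cos.comp ((continuous_fst.inner continuous_const).mul continuous_snd))

lemma gf_cont_z (lam : ℝ) (t : EuclideanSpace ℝ (Fin d)) :
    Continuous (fun z => gf a lam t z) := by
  unfold gf
  refine continuous_const.mul (continuous_finset_sum _ fun k _ => ?_)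
  exact continuous_const.sub
    (Real.continuous_cos.comp (continuous_const.mul continuous_id))

lemma gf_cont_t (lam : ℝ) (z : ℝ) :
    Continuous (fun t => gf a lam t z) := by
  unfold gf
  refine continuous_const.mul (continuous_finset_sum _ fun k _ => ?_)
  exact continuous_const.sub
    (Real.continuous_cos.comp ((continuous_id.inner continuous_const).mul continuous_const))

lemma gf_le (hlam : 0 < lam) (t : EuclideanSpace ℝ (Fin d)) (z : ℝ) : gf a lam t z ≤ 0 := by
  unfold gf
  have h : (0:ℝ) ≤ ∑ k, (1 - Real.cos ((inner ℝ t (a k) : ℝ) * z)) :=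
    Finset.sum_nonneg fun k _ => by nlinarith [Real.cos_le_one ((inner ℝ t (a k) : ℝ) * z)]
  nlinarith

lemma gf_ge (hlam : 0 < lam) (t : EuclideanSpace ℝ (Fin d)) (z : ℝ) :
    -(lam * n) ≤ gf a lam t z := by
  unfold gf
  have h : ∑ k, (1 - Real.cos ((inner ℝ t (a k) : ℝ) * z)) ≤ 2 * n := by
    calc ∑ k : Fin n, (1 - Real.cos ((inner ℝ t (a k) : ℝ) * z)) ≤ ∑ _k : Fin n, (2:ℝ) :=
          Finset.sum_le_sum fun k _ => by
            nlinarith [Real.neg_one_le_cos ((inner ℝ t (a k) : ℝ) * z)]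
      _ = 2 * n := by simp [mul_comm]
  nlinarith

lemma gf_abs (hlam : 0 < lam) (t : EuclideanSpace ℝ (Fin d)) (z : ℝ) :
    |gf a lam t z| ≤ lam * n := by
  rw [abs_le]
  exact ⟨by simpa using gf_ge a hlam t z, (gf_le a hlam t z).trans (by positivity)⟩

end basics

section setS
variable {d : ℕ} {T : ℝ}

lemma supNorm_continuous : Continuous (supNorm (d := d)) :=
  (PiLp.continuous_ofLp 2 (fun _ : Fin d => ℝ)).norm

lemma S_closed : IsClosed {t : EuclideanSpace ℝ (Fin d) | supNorm t ≤ T} :=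
  isClosed_le supNorm_continuous continuous_const

lemma coord_le_norm (t : EuclideanSpace ℝ (Fin d)) (i : Fin d) : |t i| ≤ ‖t‖ := by
  rw [EuclideanSpace.norm_eq]
  have h1 : |t i| = Real.sqrt (‖t i‖ ^ 2) := by
    rw [Real.sqrt_sq_eq_abs, Real.norm_eq_abs, abs_abs]
  rw [h1]
  exact Real.sqrt_le_sqrt (Finset.single_le_sum (f := fun j => ‖t j‖ ^ 2)
    (fun j _ => by positivity) (Finset.mem_univ i))

lemma supNorm_le_norm (t : EuclideanSpace ℝ (Fin d)) : supNorm t ≤ ‖t‖ := by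
  unfold supNorm
  rw [pi_norm_le_iff_of_nonneg (norm_nonneg t)]
  intro i
  simpa [Real.norm_eq_abs] using coord_le_norm t i

lemma coord_le_supNorm (t : EuclideanSpace ℝ (Fin d)) (i : Fin d) : |t i| ≤ supNorm t := by
  simpa [Real.norm_eq_abs, supNorm] using norm_le_pi_norm ((WithLp.equiv 2 (Fin d → ℝ)) t) i

lemma S_bounded (hT : 0 < T) :
    Bornology.IsBounded {t : EuclideanSpace ℝ (Fin d) | supNorm t ≤ T} := by
  refine (isBounded_closedBall (x := (0 : EuclideanSpace ℝ (Fin d)))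
    (r := Real.sqrt (d * T ^ 2))).subset ?_
  intro t ht
  simp only [Set.mem_setOf_eq] at ht
  rw [mem_closedBall, dist_zero_right, EuclideanSpace.norm_eq]
  apply Real.sqrt_le_sqrt
  calc ∑ i, ‖t i‖ ^ 2 ≤ ∑ _i : Fin d, T ^ 2 := by
        refine Finset.sum_le_sum fun i _ => ?_
        have := (coord_le_supNorm t i).trans ht
        rw [Real.norm_eq_abs]
        nlinarith [abs_nonneg (t i)]
    _ = d * T ^ 2 := by simp [mul_comm]

lemma S_vol_pos (hT : 0 < T) :
    0 < volume {t : EuclideanSpace ℝ (Fin d) | supNorm t ≤ T} := by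
  refine lt_of_lt_of_le (measure_ball_pos volume (0 : EuclideanSpace ℝ (Fin d)) hT)
    (measure_mono ?_)
  intro t ht
  rw [mem_ball, dist_zero_right] at ht
  exact (supNorm_le_norm t).trans ht.le

lemma S_vol_fin (hT : 0 < T) :
    volume {t : EuclideanSpace ℝ (Fin d) | supNorm t ≤ T} < ⊤ :=
  (S_bounded hT).measure_lt_top

end setS

lemma intBdd {α : Type*} [MeasurableSpace α] {μ : Measure α} [IsFiniteMeasure μ]
    {f : α → ℝ} (hm : AEStronglyMeasurable f μ) {C : ℝ} (h : ∀ x, |f x| ≤ C) :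
    Integrable f μ :=
  ⟨hm, HasFiniteIntegral.of_bounded (C := C) (Filter.Eventually.of_forall h)⟩

lemma abslog_le {c₁ c₂ x : ℝ} (hc : 0 < c₁) (h1 : c₁ ≤ x) (h2 : x ≤ c₂) :
    |Real.log x| ≤ max |Real.log c₁| |Real.log c₂| := by
  have l1 : Real.log c₁ ≤ Real.log x := Real.log_le_log hc h1
  have l2 : Real.log x ≤ Real.log c₂ := Real.log_le_log (hc.trans_le h1) h2
  exact abs_le_max_abs_abs l1 l2

lemma gibbs {α : Type*} [MeasurableSpace α] {μ : Measure α} [IsFiniteMeasure μ]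
    {w f : α → ℝ} (hwpos : ∀ t, 0 < w t)
    (hw : Integrable w μ) (hwf : Integrable (fun t => w t * f t) μ)
    (hwlw : Integrable (fun t => w t * Real.log (w t)) μ)
    (hef : Integrable (fun t => Real.exp (f t)) μ)
    (hw1 : ∫ t, w t ∂μ = 1) :
    (∫ t, w t * f t ∂μ) - ∫ t, w t * Real.log (w t) ∂μ
      ≤ Real.log (∫ t, Real.exp (f t) ∂μ) := by
  set M := ∫ t, Real.exp (f t) ∂μ with hM
  have hμ : μ ≠ 0 := by
    intro h
    rw [h] at hw1
    simp at hw1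
  have hMpos : 0 < M := by
    rw [hM, ]
    rw [integral_pos_iff_support_of_nonneg (fun t => (Real.exp_pos _).le) hef]
    have : Function.support (fun t => Real.exp (f t)) = Set.univ := by
      ext t; simp [Function.support, Real.exp_ne_zero]
    rw [this]
    exact Measure.measure_univ_pos.mpr hμ
  have key : ∀ t, w t * f t - w t * Real.log (w t) - w t * Real.log M
      ≤ Real.exp (f t) / M - w t := by
    intro t
    have hwt := hwpos t
    have hx : 0 < Real.exp (f t) / (w t * M) := by positivity
    have hlog := Real.log_le_sub_one_of_pos hx
    have heq : Real.log (Real.exp (f t) / (w t * M))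
        = f t - Real.log (w t) - Real.log M := by
      rw [Real.log_div (Real.exp_ne_zero _) (by positivity), Real.log_exp,
        Real.log_mul hwt.ne' hMpos.ne']
      ring
    rw [heq] at hlog
    have h2 := mul_le_mul_of_nonneg_left hlog hwt.le
    have h3 : w t * (Real.exp (f t) / (w t * M) - 1) = Real.exp (f t) / M - w t := by
      field_simp
    rw [h3] at h2
    nlinarith [h2]
  have h1 : Integrable (fun t => w t * f t - w t * Real.log (w t) - w t * Real.log M) μ :=
    (hwf.sub hwlw).sub (hw.mul_const _)
  have h2 : Integrable (fun t => Real.exp (f t) / M - w t) μ := (hef.div_const _).sub hw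
  have hint := integral_mono h1 h2 key
  have e1 : ∫ a, (w a * f a - w a * Real.log (w a) - w a * Real.log M) ∂μ
      = (∫ t, w t * f t ∂μ) - (∫ t, w t * Real.log (w t) ∂μ) - Real.log M := by
    rw [integral_sub (f := fun a => w a * f a - w a * Real.log (w a))
      (g := fun a => w a * Real.log M) (hwf.sub hwlw) (hw.mul_const _),
      integral_sub hwf hwlw, integral_mul_const, hw1, one_mul]
  have e2 : ∫ a, (Real.exp (f a) / M - w a) ∂μ = 0 := by
    rw [integral_sub (hef.div_const _) hw, integral_div, hw1, ← hM,
      div_self hMpos.ne']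
    ring
  rw [e1, e2] at hint
  linarith


set_option maxHeartbeats 2000000 in
/-- the Jensen/Hölder-type inequality (formula (15) of the paper). -/
theorem stmt7 (d n : ℕ) (a : Fin n → EuclideanSpace ℝ (Fin d)) (lam T : ℝ)
    (hlam : 0 < lam) (hT : 0 < T) (F : Measure ℝ) [IsProbabilityMeasure F] :
    Real.log (∫ t in {t : EuclideanSpace ℝ (Fin d) | supNorm t ≤ T},
        Real.exp (-(1/2) * ∑ k, ∫ z, (1 - Real.cos ((inner ℝ t (a k) : ℝ) * z)) * lam ∂F))
      ≤ ∫ z, Real.log (∫ t in {t : EuclideanSpace ℝ (Fin d) | supNorm t ≤ T},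
          Real.exp (-(lam/2) * ∑ k, (1 - Real.cos ((inner ℝ t (a k) : ℝ) * z)))) ∂F := by
  set S := {t : EuclideanSpace ℝ (Fin d) | supNorm t ≤ T} with hSdef
  set μ := volume.restrict S with hμdef
  haveI hfin : IsFiniteMeasure μ :=
    ⟨by rw [hμdef, Measure.restrict_apply_univ]; exact S_vol_fin hT⟩
  set V := (volume S).toReal with hVdef
  have hVpos : 0 < V := ENNReal.toReal_pos (S_vol_pos hT).ne' (S_vol_fin hT).ne
  have hμuniv : (μ Set.univ).toReal = V := by rw [hμdef, Measure.restrict_apply_univ]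
  -- continuity and integrability in z
  have hgz_cont : ∀ t, Continuous (fun z => gf a lam t z) := fun t => gf_cont_z a lam t
  have hgt_cont : ∀ z : ℝ, Continuous (fun t => gf a lam t z) := fun z => gf_cont_t a lam z
  have hgzint : ∀ t, Integrable (fun z => gf a lam t z) F :=
    fun t => intBdd (hgz_cont t).aestronglyMeasurable (gf_abs a hlam t)
  set I := fun t => ∫ z, gf a lam t z ∂F with hIdef
  have hIcont : Continuous I := by
    refine continuous_of_dominated (fun t => (hgz_cont t).aestronglyMeasurable)
      (fun t => Filter.Eventually.of_forall fun z => ?_) (integrable_const (lam * n))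
      (Filter.Eventually.of_forall fun z => hgt_cont z)
    simpa [Real.norm_eq_abs] using gf_abs a hlam t z
  have hIle : ∀ t, I t ≤ 0 := fun t => integral_nonpos fun z => gf_le a hlam t z
  have hIge : ∀ t, -(lam * n) ≤ I t := by
    intro t
    have h := integral_mono (integrable_const (-(lam * n))) (hgzint t)
      (fun z => gf_ge a hlam t z)
    simpa using h
  have hIabs : ∀ t, |I t| ≤ lam * n := fun t =>
    abs_le.mpr ⟨hIge t, (hIle t).trans (by positivity)⟩
  set p := fun t => Real.exp (I t) with hpdef
  have hppos : ∀ t, 0 < p t := fun t => Real.exp_pos _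
  have hple : ∀ t, p t ≤ 1 := fun t => by
    rw [hpdef]
    exact (Real.exp_le_exp.mpr (hIle t)).trans_eq Real.exp_zero
  have hpge : ∀ t, Real.exp (-(lam * n)) ≤ p t := fun t => Real.exp_le_exp.mpr (hIge t)
  have hpcont : Continuous p := Real.continuous_exp.comp hIcont
  have hpint : Integrable p μ := intBdd hpcont.aestronglyMeasurable (C := 1)
    (fun t => by rw [abs_of_pos (hppos t)]; exact hple t)
  set Z := ∫ t, p t ∂μ with hZdef
  have hZge : Real.exp (-(lam * n)) * V ≤ Z := by
    have h := integral_mono (integrable_const (Real.exp (-(lam * n)))) hpint hpge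
    simpa [integral_const, show μ.real Set.univ = V from hμuniv, mul_comm] using h
  have hZpos : 0 < Z := lt_of_lt_of_le (by positivity) hZge
  set w := fun t => p t / Z with hwdef
  have hwpos : ∀ t, 0 < w t := fun t => div_pos (hppos t) hZpos
  have hwcont : Continuous w := hpcont.div_const Z
  have hwle : ∀ t, w t ≤ 1 / Z := fun t => by
    apply div_le_div_of_nonneg_right (hple t) hZpos.le
  have hwge : ∀ t, Real.exp (-(lam * n)) / Z ≤ w t := fun t => by
    apply div_le_div_of_nonneg_right (hpge t) hZpos.le
  have hwabs : ∀ t, |w t| ≤ 1 / Z := fun t => by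
    rw [abs_of_pos (hwpos t)]; exact hwle t
  have hwint : Integrable w μ := intBdd hwcont.aestronglyMeasurable hwabs
  have hw1 : ∫ t, w t ∂μ = 1 := by
    rw [hwdef]
    simp only [integral_div, ← hZdef]
    exact div_self hZpos.ne'
  have hlogw_abs : ∀ t, |Real.log (w t)|
      ≤ max |Real.log (Real.exp (-(lam * n)) / Z)| |Real.log (1 / Z)| := fun t =>
    abslog_le (by positivity) (hwge t) (hwle t)
  have hwlwint : Integrable (fun t => w t * Real.log (w t)) μ := by
    refine intBdd ((hwcont.measurable.mul
      (Real.measurable_log.comp hwcont.measurable)).aestronglyMeasurable)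
      (C := (1 / Z) * max |Real.log (Real.exp (-(lam * n)) / Z)| |Real.log (1 / Z)|) ?_
    intro t
    rw [abs_mul]
    exact mul_le_mul (hwabs t) (hlogw_abs t) (abs_nonneg _) (by positivity)
  -- M
  set M := fun z : ℝ => ∫ t, Real.exp (gf a lam t z) ∂μ with hMdef
  have hMexpint : ∀ z, Integrable (fun t => Real.exp (gf a lam t z)) μ := fun z =>
    intBdd (Real.continuous_exp.comp (hgt_cont z)).aestronglyMeasurable (C := 1)
      (fun t => by
        rw [abs_of_pos (Real.exp_pos _)]
        simpa using Real.exp_le_exp.mpr (gf_le a hlam t z))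
  have hMle : ∀ z, M z ≤ V := by
    intro z
    have h := integral_mono (hMexpint z) (integrable_const 1)
      (fun t => by simpa using Real.exp_le_exp.mpr (gf_le a hlam t z))
    simpa [integral_const, show μ.real Set.univ = V from hμuniv] using h
  have hMge : ∀ z, Real.exp (-(lam * n)) * V ≤ M z := by
    intro z
    have h := integral_mono (integrable_const (Real.exp (-(lam * n)))) (hMexpint z)
      (fun t => Real.exp_le_exp.mpr (gf_ge a hlam t z))
    simpa [integral_const, show μ.real Set.univ = V from hμuniv, mul_comm] using h
  -- Gibbs for each z
  have hwgint : ∀ z, Integrable (fun t => w t * gf a lam t z) μ := fun z => by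
    refine intBdd (hwcont.mul (hgt_cont z)).aestronglyMeasurable
      (C := (1 / Z) * (lam * n)) ?_
    intro t
    rw [abs_mul]
    exact mul_le_mul (hwabs t) (gf_abs a hlam t z) (abs_nonneg _) (by positivity)
  have hkey : ∀ z, (∫ t, w t * gf a lam t z ∂μ) - (∫ t, w t * Real.log (w t) ∂μ)
      ≤ Real.log (M z) := fun z =>
    gibbs hwpos hwint (hwgint z) hwlwint (hMexpint z) hw1
  -- Fubini
  have hprod : Integrable (Function.uncurry fun t z => w t * gf a lam t z) (μ.prod F) := by
    refine intBdd (((hwcont.comp continuous_fst).mul (gf_cont a)).aestronglyMeasurable)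
      (C := (1 / Z) * (lam * n)) ?_
    rintro ⟨t, z⟩
    simp only [Function.uncurry]
    rw [abs_mul]
    exact mul_le_mul (hwabs t) (gf_abs a hlam t z) (abs_nonneg _) (by positivity)
  have hswap : (∫ t, ∫ z, w t * gf a lam t z ∂F ∂μ)
      = ∫ z, ∫ t, w t * gf a lam t z ∂μ ∂F := integral_integral_swap hprod
  have hwIint : Integrable (fun t => w t * I t) μ := by
    refine intBdd (hwcont.mul hIcont).aestronglyMeasurable (C := (1 / Z) * (lam * n)) ?_
    intro t
    rw [abs_mul]
    exact mul_le_mul (hwabs t) (hIabs t) (abs_nonneg _) (by positivity)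
  have hwI_eq : (∫ t, w t * I t ∂μ) = ∫ z, ∫ t, w t * gf a lam t z ∂μ ∂F := by
    rw [← hswap]
    refine integral_congr_ae (Filter.Eventually.of_forall fun t => ?_)
    rw [hIdef]
    exact (integral_const_mul (w t) _).symm
  have hlogZ : Real.log Z = (∫ t, w t * I t ∂μ) - ∫ t, w t * Real.log (w t) ∂μ := by
    have hlw : ∀ t, w t * Real.log (w t) = w t * I t - w t * Real.log Z := by
      intro t
      rw [hwdef]
      simp only
      rw [Real.log_div (hppos t).ne' hZpos.ne', hpdef]
      simp only [Real.log_exp]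
      ring
    have h2 : (∫ t, w t * Real.log (w t) ∂μ) = (∫ t, w t * I t ∂μ) - Real.log Z := by
      calc (∫ t, w t * Real.log (w t) ∂μ)
          = ∫ t, (w t * I t - w t * Real.log Z) ∂μ :=
            integral_congr_ae (Filter.Eventually.of_forall hlw)
        _ = (∫ t, w t * I t ∂μ) - Real.log Z := by
            rw [integral_sub hwIint (hwint.mul_const _), integral_mul_const, hw1, one_mul]
    rw [h2]
    ring
  -- integrability in z of the two sides
  have hA : Integrable (fun z => ∫ t, w t * gf a lam t z ∂μ) F := hprod.integral_prod_right
  have hMprodint : Integrable (Function.uncurry fun t z => Real.exp (gf a lam t z))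
      (μ.prod F) := by
    refine intBdd ((Real.continuous_exp.comp (gf_cont a)).aestronglyMeasurable) (C := 1) ?_
    rintro ⟨t, z⟩
    simp only [Function.uncurry]
    rw [abs_of_pos (Real.exp_pos _)]
    simpa using Real.exp_le_exp.mpr (gf_le a hlam t z)
  have hMint : Integrable M F := hMprodint.integral_prod_right
  have hB : Integrable (fun z => Real.log (M z)) F := by
    refine intBdd ((Real.measurable_log.comp_aemeasurable
      hMint.aemeasurable).aestronglyMeasurable)
      (C := max |Real.log (Real.exp (-(lam * n)) * V)| |Real.log V|) ?_
    intro z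
    exact abslog_le (by positivity) (hMge z) (hMle z)
  -- identify the LHS integrand with p
  have hexp : ∀ t, -(1/2 : ℝ) * ∑ k, ∫ z, (1 - Real.cos ((inner ℝ t (a k) : ℝ) * z)) * lam ∂F
      = I t := by
    intro t
    have hcosint : ∀ k : Fin n,
        Integrable (fun z => 1 - Real.cos ((inner ℝ t (a k) : ℝ) * z)) F := by
      intro k
      refine intBdd (continuous_const.sub
        (Real.continuous_cos.comp (continuous_const.mul continuous_id))).aestronglyMeasurable
        (C := 2) ?_
      intro z
      rw [abs_le]
      constructor
      · nlinarith [Real.cos_le_one ((inner ℝ t (a k) : ℝ) * z)]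
      · nlinarith [Real.neg_one_le_cos ((inner ℝ t (a k) : ℝ) * z)]
    have h1 : I t = -(lam/2) * ∑ k, ∫ z, (1 - Real.cos ((inner ℝ t (a k) : ℝ) * z)) ∂F := by
      rw [hIdef]
      simp only [gf_apply]
      rw [integral_const_mul, integral_finset_sum _ (fun k _ => hcosint k)]
    have h2 : ∀ k : Fin n, (∫ z, (1 - Real.cos ((inner ℝ t (a k) : ℝ) * z)) * lam ∂F)
        = (∫ z, (1 - Real.cos ((inner ℝ t (a k) : ℝ) * z)) ∂F) * lam := fun k =>
      integral_mul_const lam _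
    rw [h1]
    simp only [h2]
    rw [← Finset.sum_mul]
    ring
  have hLHS : (∫ t, Real.exp (-(1/2 : ℝ) * ∑ k, ∫ z,
      (1 - Real.cos ((inner ℝ t (a k) : ℝ) * z)) * lam ∂F) ∂μ) = Z := by
    rw [hZdef]
    refine integral_congr_ae (Filter.Eventually.of_forall fun t => ?_)
    simp only [hexp, hpdef]
  calc Real.log (∫ t, Real.exp (-(1/2 : ℝ) * ∑ k, ∫ z,
        (1 - Real.cos ((inner ℝ t (a k) : ℝ) * z)) * lam ∂F) ∂μ)
      = Real.log Z := by rw [hLHS]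
    _ = ∫ z, ((∫ t, w t * gf a lam t z ∂μ) - ∫ t, w t * Real.log (w t) ∂μ) ∂F := by
        rw [hlogZ, hwI_eq, integral_sub hA (integrable_const _), integral_const,
          probReal_univ, one_smul]
    _ ≤ ∫ z, Real.log (M z) ∂F :=
        integral_mono (hA.sub (integrable_const _)) hB fun z => hkey z
    _ = ∫ z, Real.log (∫ t, Real.exp (-(lam/2) *
          ∑ k, (1 - Real.cos ((inner ℝ t (a k) : ℝ) * z))) ∂μ) ∂F := by
        simp only [hMdef, gf_apply]
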